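/- arXiv:2111.07747 — 3 statements merged into one kernel-verified Lean document; each statement's English description precedes it below -/
import Mathlib

section
/- For every n ≥ 1: (i) a(r·n) + r·a(n/r) = (φ(r) + r·φ⁻¹(r))·a(n) for every prime r with r ∤ f·T₁·T₂; (ii) a(l·n) = l·φ⁻¹(l)·a(n) for every prime l ∣ T₁; (iii) a(q·n) = φ(q)·a(n) for every prime q ∣ T₂; (iv) a(p·n) = 0 for every prime p ∣ f. Equivalently, E_{φ,T₁,T₂} is an eigenform for all Hecke operators, with T_r-eigenvalue φ(r) + r·φ⁻¹(r) for r ∤ fT₁T₂, U_l-eigenvalue l·φ⁻¹(l) for l ∣ T₁, U_q-eigenvalue φ(q) for q ∣ T₂, and U_p-eigenvalue 0 for p ∣ f. -/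
open scoped BigOperators

/-- The `n`-th Fourier coefficient of the weight-2 Eisenstein series `E_φ = E_{φ,φ⁻¹}`:
`b(n) = Σ_{d ∣ n} φ(n/d) · φ⁻¹(d) · d`. -/
noncomputable def eisCoeff (f : ℕ) (φ : DirichletCharacter ℂ f) (n : ℕ) : ℂ :=
  ∑ d ∈ n.divisors, φ ((n / d : ℕ) : ZMod f) * φ⁻¹ ((d : ℕ) : ZMod f) * (d : ℂ)

/-- The `n`-th Fourier coefficient of the refined Eisenstein series
`E_{φ,T₁,T₂} = ∏_{l ∣ T₁}[l]_φ⁺ ∘ ∏_{q ∣ T₂}[q]_φ⁻ E_φ`: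
`a(n) = Σ_{e ∣ T₁T₂} μ(e)·(∏_{l ∣ gcd(e,T₁)} φ(l))·(∏_{q ∣ gcd(e,T₂)} q·φ⁻¹(q))·b(n/e)`,
with `b(n/e)` interpreted as `0` when `e ∤ n`. -/
noncomputable def refCoeff (f : ℕ) (φ : DirichletCharacter ℂ f) (T₁ T₂ : ℕ) (n : ℕ) : ℂ :=
  ∑ e ∈ (T₁ * T₂).divisors,
    ((ArithmeticFunction.moebius e : ℤ) : ℂ) *
      (∏ l ∈ (Nat.gcd e T₁).primeFactors, φ ((l : ℕ) : ZMod f)) *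
      (∏ q ∈ (Nat.gcd e T₂).primeFactors, (q : ℂ) * φ⁻¹ ((q : ℕ) : ZMod f)) *
      (if e ∣ n then eisCoeff f φ (n / e) else 0)

lemma filter_dvd_eq_image {r : ℕ} (hr : 0 < r) (k : ℕ) :
    (r * k).divisors.filter (fun d => r ∣ d) = k.divisors.image (fun e => r * e) := by
  ext d
  simp only [Finset.mem_filter, Nat.mem_divisors, Finset.mem_image]
  constructor
  · rintro ⟨⟨hd, hne⟩, e, rfl⟩
    exact ⟨e, ⟨(mul_dvd_mul_iff_left (by omega : r ≠ 0)).mp hd,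
      fun h => hne (by rw [h, mul_zero])⟩, rfl⟩
  · rintro ⟨e, ⟨he, hk⟩, rfl⟩
    exact ⟨⟨mul_dvd_mul_left r he, Nat.mul_ne_zero (by omega) hk⟩, Dvd.intro e rfl⟩

lemma eis_mul_prime (f : ℕ) (φ : DirichletCharacter ℂ f) {r : ℕ} (hr : r.Prime) (m : ℕ) :
    eisCoeff f φ (r * m)
      = (φ ((r : ℕ) : ZMod f) + (r : ℂ) * φ⁻¹ ((r : ℕ) : ZMod f)) * eisCoeff f φ m
        - (r : ℂ) * (φ ((r : ℕ) : ZMod f) * φ⁻¹ ((r : ℕ) : ZMod f)) *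
          (if r ∣ m then eisCoeff f φ (m / r) else 0) := by
  rcases eq_or_ne m 0 with rfl | hm
  · simp [eisCoeff]
  have hr0 : 0 < r := hr.pos
  have hinj : ∀ (k : ℕ), ∀ x ∈ k.divisors, ∀ y ∈ k.divisors,
      r * x = r * y → x = y := fun _ x _ y _ h => Nat.eq_of_mul_eq_mul_left hr0 h
  have hC : ∑ d ∈ m.divisors.filter (fun d => r ∣ d),
      φ ((m / d : ℕ) : ZMod f) * φ⁻¹ ((d : ℕ) : ZMod f) * (d : ℂ)
      = (r : ℂ) * φ⁻¹ ((r : ℕ) : ZMod f) * (if r ∣ m then eisCoeff f φ (m / r) else 0) := by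
    by_cases hrm : r ∣ m
    · obtain ⟨m', rfl⟩ := hrm
      rw [if_pos (Dvd.intro m' rfl), filter_dvd_eq_image hr0 m',
        Finset.sum_image (hinj m'), Nat.mul_div_cancel_left m' hr0, eisCoeff, Finset.mul_sum]
      refine Finset.sum_congr rfl fun e he => ?_
      rw [Nat.mul_div_mul_left _ _ hr0]
      push_cast
      rw [map_mul]
      ring
    · rw [if_neg hrm, Finset.filter_false_of_mem, Finset.sum_empty, mul_zero]
      exact fun d hd hrd => hrm (hrd.trans (Nat.mem_divisors.mp hd).1)
  have hB : ∑ d ∈ (r * m).divisors.filter (fun d => r ∣ d),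
      φ (((r * m) / d : ℕ) : ZMod f) * φ⁻¹ ((d : ℕ) : ZMod f) * (d : ℂ)
      = (r : ℂ) * φ⁻¹ ((r : ℕ) : ZMod f) * eisCoeff f φ m := by
    rw [filter_dvd_eq_image hr0 m, Finset.sum_image (hinj m), eisCoeff, Finset.mul_sum]
    refine Finset.sum_congr rfl fun e he => ?_
    rw [Nat.mul_div_mul_left _ _ hr0]
    push_cast
    rw [map_mul]
    ring
  have hsetA : (r * m).divisors.filter (fun d => ¬ r ∣ d)
      = m.divisors.filter (fun d => ¬ r ∣ d) := by
    ext d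
    simp only [Finset.mem_filter, Nat.mem_divisors]
    constructor
    · rintro ⟨⟨hd, _⟩, hnd⟩
      exact ⟨⟨((Nat.Prime.coprime_iff_not_dvd hr).mpr hnd).symm.dvd_of_dvd_mul_left hd, hm⟩, hnd⟩
    · rintro ⟨⟨hd, _⟩, hnd⟩
      exact ⟨⟨hd.mul_left r, Nat.mul_ne_zero (by omega) hm⟩, hnd⟩
  have hA : ∑ d ∈ (r * m).divisors.filter (fun d => ¬ r ∣ d),
      φ (((r * m) / d : ℕ) : ZMod f) * φ⁻¹ ((d : ℕ) : ZMod f) * (d : ℂ)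
      = φ ((r : ℕ) : ZMod f) * (eisCoeff f φ m
          - (r : ℂ) * φ⁻¹ ((r : ℕ) : ZMod f) * (if r ∣ m then eisCoeff f φ (m / r) else 0)) := by
    rw [hsetA]
    have step : ∑ d ∈ m.divisors.filter (fun d => ¬ r ∣ d),
        φ (((r * m) / d : ℕ) : ZMod f) * φ⁻¹ ((d : ℕ) : ZMod f) * (d : ℂ)
        = φ ((r : ℕ) : ZMod f) * ∑ d ∈ m.divisors.filter (fun d => ¬ r ∣ d),
            φ ((m / d : ℕ) : ZMod f) * φ⁻¹ ((d : ℕ) : ZMod f) * (d : ℂ) := by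
      rw [Finset.mul_sum]
      refine Finset.sum_congr rfl fun d hd => ?_
      have hdm : d ∣ m := (Nat.mem_divisors.mp (Finset.mem_filter.mp hd).1).1
      rw [Nat.mul_div_assoc r hdm]
      push_cast
      rw [map_mul]
      ring
    rw [step, ← hC]
    have hsplit := Finset.sum_filter_add_sum_filter_not m.divisors (fun d => r ∣ d)
      (fun d => φ ((m / d : ℕ) : ZMod f) * φ⁻¹ ((d : ℕ) : ZMod f) * (d : ℂ))
    rw [eisCoeff]
    linear_combination φ ((r : ℕ) : ZMod f) * hsplit
  rw [eisCoeff, ← Finset.sum_filter_add_sum_filter_not ((r * m).divisors) (fun d => r ∣ d),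
    hB, hA]
  ring

noncomputable def bbAux (f : ℕ) (φ : DirichletCharacter ℂ f) (n e : ℕ) : ℂ :=
  if e ∣ n then eisCoeff f φ (n / e) else 0

lemma bb_shift (f : ℕ) (φ : DirichletCharacter ℂ f) (s e n : ℕ) (hs : 0 < s) :
    bbAux f φ n (s * e) = if s ∣ n then bbAux f φ (n / s) e else 0 := by
  by_cases hsn : s ∣ n
  · rw [if_pos hsn, bbAux, bbAux, ← Nat.div_div_eq_div_mul]
    exact if_congr (Nat.dvd_div_iff_mul_dvd hsn).symm rfl rfl
  · rw [if_neg hsn, bbAux, if_neg (fun h => hsn ((dvd_mul_right s e).trans h))]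

lemma bb_cancel (f : ℕ) (φ : DirichletCharacter ℂ f) (s e n : ℕ) (hs : 0 < s) :
    bbAux f φ (s * n) (s * e) = bbAux f φ n e := by
  rw [bbAux, bbAux, Nat.mul_div_mul_left _ _ hs]
  exact if_congr (mul_dvd_mul_iff_left (by omega : s ≠ 0)) rfl rfl

lemma bb_master (f : ℕ) (φ : DirichletCharacter ℂ f) {s e : ℕ} (hs : s.Prime)
    (hse : ¬ s ∣ e) (n : ℕ) :
    bbAux f φ (s * n) e
      = (φ ((s : ℕ) : ZMod f) + (s : ℂ) * φ⁻¹ ((s : ℕ) : ZMod f)) * bbAux f φ n e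
        - (s : ℂ) * (φ ((s : ℕ) : ZMod f) * φ⁻¹ ((s : ℕ) : ZMod f)) * bbAux f φ n (s * e) := by
  have hcop : Nat.Coprime e s := ((Nat.Prime.coprime_iff_not_dvd hs).mpr hse).symm
  by_cases hen : e ∣ n
  · have h1 : e ∣ s * n := hen.mul_left s
    have h2 : s * n / e = s * (n / e) := Nat.mul_div_assoc s hen
    have h3 : bbAux f φ n (s * e) = if s ∣ n / e then eisCoeff f φ (n / e / s) else 0 := by
      rw [bbAux, show n / (s * e) = n / e / s by rw [Nat.div_div_eq_div_mul, mul_comm]]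
      exact if_congr (by rw [Nat.dvd_div_iff_mul_dvd hen, mul_comm]) rfl rfl
    rw [bbAux, if_pos h1, h2, bbAux, if_pos hen, h3]
    exact eis_mul_prime f φ hs (n / e)
  · have h1 : ¬ e ∣ s * n := fun h => hen (hcop.dvd_of_dvd_mul_left h)
    have h2 : ¬ s * e ∣ n := fun h => hen ((dvd_mul_left e s).trans h)
    rw [bbAux, if_neg h1, bbAux, if_neg hen, bbAux, if_neg h2]
    ring

lemma phi_mul_inv (f : ℕ) (φ : DirichletCharacter ℂ f) {r : ℕ}
    (h : IsUnit ((r : ℕ) : ZMod f)) :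
    φ ((r : ℕ) : ZMod f) * φ⁻¹ ((r : ℕ) : ZMod f) = 1 := by
  rw [← MulChar.mul_apply, mul_inv_cancel, MulChar.one_apply h]

lemma phi_unit_of_prime_not_dvd (f : ℕ) (hf : 1 < f) {r : ℕ} (hr : r.Prime)
    (hrf : ¬ r ∣ f) : IsUnit ((r : ℕ) : ZMod f) := by
  rw [ZMod.isUnit_iff_coprime]
  exact (Nat.Prime.coprime_iff_not_dvd hr).mpr hrf

lemma phi_zero_of_dvd (f : ℕ) (φ : DirichletCharacter ℂ f) (hf : 1 < f) {p : ℕ}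
    (hp : p.Prime) (hpf : p ∣ f) :
    φ ((p : ℕ) : ZMod f) = 0 ∧ φ⁻¹ ((p : ℕ) : ZMod f) = 0 := by
  have h : ¬ IsUnit ((p : ℕ) : ZMod f) := by
    rw [ZMod.isUnit_iff_coprime]
    intro h
    exact hp.one_lt.ne' (Nat.eq_one_of_dvd_one (h ▸ Nat.dvd_gcd dvd_rfl hpf))
  exact ⟨MulChar.map_nonunit φ h, MulChar.map_nonunit φ⁻¹ h⟩

noncomputable def ctermAux (f : ℕ) (φ : DirichletCharacter ℂ f) (T₁ T₂ e : ℕ) : ℂ :=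
  ((ArithmeticFunction.moebius e : ℤ) : ℂ) *
    (∏ l ∈ (Nat.gcd e T₁).primeFactors, φ ((l : ℕ) : ZMod f)) *
    (∏ q ∈ (Nat.gcd e T₂).primeFactors, (q : ℂ) * φ⁻¹ ((q : ℕ) : ZMod f))

lemma refCoeff_eq (f : ℕ) (φ : DirichletCharacter ℂ f) (T₁ T₂ n : ℕ) :
    refCoeff f φ T₁ T₂ n = ∑ e ∈ (T₁ * T₂).divisors, ctermAux f φ T₁ T₂ e * bbAux f φ n e :=
  rfl

lemma sum_divisors_split {s M : ℕ} (hs : s.Prime) (hsM : ¬ s ∣ M) (F : ℕ → ℂ) :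
    ∑ e ∈ (s * M).divisors, F e = ∑ e ∈ M.divisors, (F e + F (s * e)) := by
  have hM : M ≠ 0 := fun h => hsM (h ▸ dvd_zero s)
  have hinj : ∀ x ∈ M.divisors, ∀ y ∈ M.divisors, s * x = s * y → x = y :=
    fun x _ y _ h => Nat.eq_of_mul_eq_mul_left hs.pos h
  rw [← Finset.sum_filter_add_sum_filter_not ((s * M).divisors) (fun d => s ∣ d),
    filter_dvd_eq_image hs.pos M, Finset.sum_image hinj]
  have hset : (s * M).divisors.filter (fun d => ¬ s ∣ d) = M.divisors := by
    ext d
    simp only [Finset.mem_filter, Nat.mem_divisors]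
    constructor
    · rintro ⟨⟨hd, _⟩, hnd⟩
      exact ⟨((Nat.Prime.coprime_iff_not_dvd hs).mpr hnd).symm.dvd_of_dvd_mul_left hd, hM⟩
    · rintro ⟨hd, _⟩
      exact ⟨⟨hd.mul_left s, Nat.mul_ne_zero hs.pos.ne' hM⟩, fun h => hsM (h.trans hd)⟩
  rw [hset, ← Finset.sum_add_distrib]
  exact Finset.sum_congr rfl fun _ _ => add_comm _ _

lemma gcd_primeFactors_insert {s e T : ℕ} (hs : s.Prime) (hsT : s ∣ T) (hse : ¬ s ∣ e)
    (hT : T ≠ 0) :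
    (Nat.gcd (s * e) T).primeFactors = insert s (Nat.gcd e T).primeFactors := by
  ext x
  simp only [Nat.mem_primeFactors, Finset.mem_insert, Nat.dvd_gcd_iff]
  constructor
  · rintro ⟨hx, ⟨hxse, hxT⟩, -⟩
    rcases (Nat.Prime.dvd_mul hx).mp hxse with h | h
    · exact Or.inl ((Nat.prime_dvd_prime_iff_eq hx hs).mp h)
    · exact Or.inr ⟨hx, ⟨h, hxT⟩, Nat.gcd_ne_zero_right hT⟩
  · rintro (rfl | ⟨hx, ⟨hxe, hxT⟩, -⟩)
    · exact ⟨hs, ⟨dvd_mul_right _ _, hsT⟩, Nat.gcd_ne_zero_right hT⟩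
    · exact ⟨hx, ⟨hxe.mul_left s, hxT⟩, Nat.gcd_ne_zero_right hT⟩

lemma gcd_primeFactors_same {s e T : ℕ} (hs : s.Prime) (hsT : ¬ s ∣ T) (hT : T ≠ 0) :
    (Nat.gcd (s * e) T).primeFactors = (Nat.gcd e T).primeFactors := by
  ext x
  simp only [Nat.mem_primeFactors, Nat.dvd_gcd_iff]
  constructor
  · rintro ⟨hx, ⟨hxse, hxT⟩, -⟩
    rcases (Nat.Prime.dvd_mul hx).mp hxse with h | h
    · exact absurd (((Nat.prime_dvd_prime_iff_eq hx hs).mp h) ▸ hxT) hsT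
    · exact ⟨hx, ⟨h, hxT⟩, Nat.gcd_ne_zero_right hT⟩
  · rintro ⟨hx, ⟨hxe, hxT⟩, -⟩
    exact ⟨hx, ⟨hxe.mul_left s, hxT⟩, Nat.gcd_ne_zero_right hT⟩

lemma s_not_mem {s e T : ℕ} (hse : ¬ s ∣ e) : s ∉ (Nat.gcd e T).primeFactors := by
  intro h
  exact hse ((Nat.mem_primeFactors.mp h).2.1.trans (Nat.gcd_dvd_left e T))

lemma moebius_mul {s e : ℕ} (hs : s.Prime) (hse : ¬ s ∣ e) :
    ((ArithmeticFunction.moebius (s * e) : ℤ) : ℂ)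
      = - ((ArithmeticFunction.moebius e : ℤ) : ℂ) := by
  rw [ArithmeticFunction.isMultiplicative_moebius.map_mul_of_coprime
    ((Nat.Prime.coprime_iff_not_dvd hs).mpr hse),
    ArithmeticFunction.moebius_apply_prime hs]
  push_cast
  ring

lemma cterm_mul₁ (f : ℕ) (φ : DirichletCharacter ℂ f) {T₁ T₂ s e : ℕ} (hs : s.Prime)
    (hsT₁ : s ∣ T₁) (hT₁ : T₁ ≠ 0) (hT₂ : T₂ ≠ 0) (hsT₂ : ¬ s ∣ T₂) (hse : ¬ s ∣ e) :
    ctermAux f φ T₁ T₂ (s * e) = - φ ((s : ℕ) : ZMod f) * ctermAux f φ T₁ T₂ e := by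
  rw [ctermAux, ctermAux, moebius_mul hs hse, gcd_primeFactors_insert hs hsT₁ hse hT₁,
    gcd_primeFactors_same hs hsT₂ hT₂, Finset.prod_insert (s_not_mem hse)]
  ring

lemma cterm_mul₂ (f : ℕ) (φ : DirichletCharacter ℂ f) {T₁ T₂ s e : ℕ} (hs : s.Prime)
    (hsT₂ : s ∣ T₂) (hT₁ : T₁ ≠ 0) (hT₂ : T₂ ≠ 0) (hsT₁ : ¬ s ∣ T₁) (hse : ¬ s ∣ e) :
    ctermAux f φ T₁ T₂ (s * e)
      = - ((s : ℂ) * φ⁻¹ ((s : ℕ) : ZMod f)) * ctermAux f φ T₁ T₂ e := by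
  rw [ctermAux, ctermAux, moebius_mul hs hse, gcd_primeFactors_insert hs hsT₂ hse hT₂,
    gcd_primeFactors_same hs hsT₁ hT₁, Finset.prod_insert (s_not_mem hse)]
  ring

lemma ref_split (f : ℕ) (φ : DirichletCharacter ℂ f) (T₁ T₂ s : ℕ) (hs : s.Prime)
    (hsT : s ∣ T₁ * T₂) (hsq : Squarefree (T₁ * T₂)) (c : ℂ)
    (hc : ∀ e, ¬ s ∣ e → ctermAux f φ T₁ T₂ (s * e) = -c * ctermAux f φ T₁ T₂ e) (n : ℕ) :
    refCoeff f φ T₁ T₂ n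
      = ∑ e ∈ (T₁ * T₂ / s).divisors,
          ctermAux f φ T₁ T₂ e * (bbAux f φ n e - c * bbAux f φ n (s * e)) := by
  have hM : s * (T₁ * T₂ / s) = T₁ * T₂ := Nat.mul_div_cancel' hsT
  have hsM : ¬ s ∣ (T₁ * T₂ / s) := fun h =>
    hs.not_isUnit (hsq s (by rw [← hM]; exact mul_dvd_mul_left s h))
  rw [refCoeff_eq, show (T₁ * T₂).divisors = (s * (T₁ * T₂ / s)).divisors from by rw [hM],
    sum_divisors_split hs hsM]
  refine Finset.sum_congr rfl fun e he => ?_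
  have hse : ¬ s ∣ e := fun h => hsM (h.trans (Nat.mem_divisors.mp he).1)
  rw [hc e hse]
  ring

lemma not_dvd_of_sq (s T₁ T₂ : ℕ) (hs : s.Prime) (hsq : Squarefree (T₁ * T₂))
    (hsT : s ∣ T₁ * T₂) : ¬ s ∣ (T₁ * T₂ / s) := fun h => by
  have hM : s * (T₁ * T₂ / s) = T₁ * T₂ := Nat.mul_div_cancel' hsT
  exact hs.not_isUnit (hsq s (by rw [← hM]; exact mul_dvd_mul_left s h))


/-- `E_{φ,T₁,T₂}` is an eigenform for all Hecke operators: `T_r`-eigenvalue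
`φ(r) + r·φ⁻¹(r)` for primes `r ∤ fT₁T₂`, `U_l`-eigenvalue `l·φ⁻¹(l)` for primes `l ∣ T₁`,
`U_q`-eigenvalue `φ(q)` for primes `q ∣ T₂`, and `U_p`-eigenvalue `0` for primes `p ∣ f`. -/
theorem refCoeff_hecke_eigen
    (f : ℕ) (hf : 1 < f) (φ : DirichletCharacter ℂ f)
    (hφ : φ ≠ 1) (hφprim : φ.IsPrimitive)
    (T₁ T₂ : ℕ) (hT₁ : 0 < T₁) (hT₂ : 0 < T₂)
    (hsf₁ : Squarefree T₁) (hsf₂ : Squarefree T₂)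
    (hT₁T₂ : Nat.Coprime T₁ T₂) (hT₁f : Nat.Coprime T₁ f) (hT₂f : Nat.Coprime T₂ f)
    (n : ℕ) (hn : 1 ≤ n) :
    (∀ r : ℕ, r.Prime → ¬ r ∣ f * T₁ * T₂ →
      refCoeff f φ T₁ T₂ (r * n) +
          (r : ℂ) * (if r ∣ n then refCoeff f φ T₁ T₂ (n / r) else 0) =
        (φ ((r : ℕ) : ZMod f) + (r : ℂ) * φ⁻¹ ((r : ℕ) : ZMod f)) * refCoeff f φ T₁ T₂ n) ∧
    (∀ l : ℕ, l.Prime → l ∣ T₁ →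
      refCoeff f φ T₁ T₂ (l * n) =
        (l : ℂ) * φ⁻¹ ((l : ℕ) : ZMod f) * refCoeff f φ T₁ T₂ n) ∧
    (∀ q : ℕ, q.Prime → q ∣ T₂ →
      refCoeff f φ T₁ T₂ (q * n) = φ ((q : ℕ) : ZMod f) * refCoeff f φ T₁ T₂ n) ∧
    (∀ p : ℕ, p.Prime → p ∣ f →
      refCoeff f φ T₁ T₂ (p * n) = 0) := by
  have hsq : Squarefree (T₁ * T₂) := (Nat.squarefree_mul hT₁T₂).mpr ⟨hsf₁, hsf₂⟩
  have hcopf : (T₁ * T₂).Coprime f := Nat.Coprime.mul hT₁f hT₂f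
  refine ⟨?_, ?_, ?_, ?_⟩
  · -- (i)
    intro r hr hrd
    rw [mul_assoc] at hrd
    have hrf : ¬ r ∣ f := fun h => hrd (dvd_mul_of_dvd_left h _)
    have hrT : ¬ r ∣ T₁ * T₂ := fun h => hrd (h.mul_left f)
    have h1 := phi_mul_inv f φ (phi_unit_of_prime_not_dvd f hf hr hrf)
    have hiter : (if r ∣ n then refCoeff f φ T₁ T₂ (n / r) else 0)
        = ∑ e ∈ (T₁ * T₂).divisors, ctermAux f φ T₁ T₂ e * bbAux f φ n (r * e) := by
      have hsh : ∀ e : ℕ, bbAux f φ n (r * e) = if r ∣ n then bbAux f φ (n / r) e else 0 :=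
        fun e => bb_shift f φ r e n hr.pos
      by_cases hrn : r ∣ n
      · simp only [if_pos hrn, hsh, refCoeff_eq]
      · simp only [if_neg hrn, hsh]
        simp
    rw [hiter, refCoeff_eq, refCoeff_eq, Finset.mul_sum, Finset.mul_sum,
      ← Finset.sum_add_distrib]
    refine Finset.sum_congr rfl fun e he => ?_
    have hre : ¬ r ∣ e := fun h => hrT (h.trans (Nat.mem_divisors.mp he).1)
    have hm := bb_master f φ hr hre n
    rw [h1] at hm
    rw [hm]
    ring
  · -- (ii)
    intro l hl hlT₁
    have hlT : l ∣ T₁ * T₂ := hlT₁.mul_right T₂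
    have hlf : ¬ l ∣ f := fun h =>
      hl.one_lt.ne' (Nat.eq_one_of_dvd_one (hT₁f ▸ Nat.dvd_gcd hlT₁ h))
    have hlT₂ : ¬ l ∣ T₂ := fun h =>
      hl.one_lt.ne' (Nat.eq_one_of_dvd_one (hT₁T₂ ▸ Nat.dvd_gcd hlT₁ h))
    have h1 := phi_mul_inv f φ (phi_unit_of_prime_not_dvd f hf hl hlf)
    have hc : ∀ e, ¬ l ∣ e → ctermAux f φ T₁ T₂ (l * e)
        = -(φ ((l : ℕ) : ZMod f)) * ctermAux f φ T₁ T₂ e :=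
      fun e he => cterm_mul₁ f φ hl hlT₁ hT₁.ne' hT₂.ne' hlT₂ he
    rw [ref_split f φ T₁ T₂ l hl hlT hsq _ hc, ref_split f φ T₁ T₂ l hl hlT hsq _ hc,
      Finset.mul_sum]
    refine Finset.sum_congr rfl fun e he => ?_
    have hle : ¬ l ∣ e := fun h =>
      (not_dvd_of_sq l T₁ T₂ hl hsq hlT) (h.trans (Nat.mem_divisors.mp he).1)
    have hm := bb_master f φ hl hle n
    rw [h1] at hm
    have hcc := bb_cancel f φ l e n hl.pos
    rw [hm, hcc]
    linear_combination ((l : ℂ)) * ctermAux f φ T₁ T₂ e * bbAux f φ n (l * e) * h1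
  · -- (iii)
    intro q hq hqT₂
    have hqT : q ∣ T₁ * T₂ := hqT₂.mul_left T₁
    have hqf : ¬ q ∣ f := fun h =>
      hq.one_lt.ne' (Nat.eq_one_of_dvd_one (hT₂f ▸ Nat.dvd_gcd hqT₂ h))
    have hqT₁ : ¬ q ∣ T₁ := fun h =>
      hq.one_lt.ne' (Nat.eq_one_of_dvd_one (hT₁T₂ ▸ Nat.dvd_gcd h hqT₂))
    have h1 := phi_mul_inv f φ (phi_unit_of_prime_not_dvd f hf hq hqf)
    have hc : ∀ e, ¬ q ∣ e → ctermAux f φ T₁ T₂ (q * e)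
        = -((q : ℂ) * φ⁻¹ ((q : ℕ) : ZMod f)) * ctermAux f φ T₁ T₂ e :=
      fun e he => cterm_mul₂ f φ hq hqT₂ hT₁.ne' hT₂.ne' hqT₁ he
    rw [ref_split f φ T₁ T₂ q hq hqT hsq _ hc, ref_split f φ T₁ T₂ q hq hqT hsq _ hc,
      Finset.mul_sum]
    refine Finset.sum_congr rfl fun e he => ?_
    have hqe : ¬ q ∣ e := fun h =>
      (not_dvd_of_sq q T₁ T₂ hq hsq hqT) (h.trans (Nat.mem_divisors.mp he).1)
    have hm := bb_master f φ hq hqe n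
    rw [h1] at hm
    have hcc := bb_cancel f φ q e n hq.pos
    rw [hm, hcc]
    linear_combination ((q : ℂ)) * ctermAux f φ T₁ T₂ e * bbAux f φ n (q * e) * h1
  · -- (iv)
    intro p hp hpf
    have hz := phi_zero_of_dvd f φ hf hp hpf
    rw [refCoeff_eq]
    refine Finset.sum_eq_zero fun e he => ?_
    have hpe : ¬ p ∣ e := fun h =>
      hp.one_lt.ne' (Nat.eq_one_of_dvd_one
        (hcopf ▸ Nat.dvd_gcd (h.trans (Nat.mem_divisors.mp he).1) hpf))
    have hm := bb_master f φ hp hpe n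
    rw [hz.1, hz.2] at hm
    simp only [mul_zero, zero_mul, zero_add, add_zero, sub_zero] at hm
    rw [hm]
    ring
end

section
/- Let χ be a Dirichlet character modulo m with gcd(m, N) = 1. For every s ∈ ℂ with Re(s) > 2, Σ_{n≥1} χ(n)·A(n)·n^{−s} = χ(D)·D^{1−s}·(∏_{l ∣ T₁}(1 − χ(l)φ(l)·l^{−s}))·(∏_{q ∣ T₂}(1 − χ(q)φ⁻¹(q)·q^{1−s}))·(Σ_{n≥1} χ(n)φ(n)·n^{−s})·(Σ_{n≥1} χ(n)φ⁻¹(n)·n^{1−s}). That is, L(E_{φ,M,L}, χ, s) = χ(ML/(T₁T₂))·(ML/(T₁T₂))^{1−s}·∏_{l∣T₁}(1 − χφ(l)l^{−s})·∏_{q∣T₂}(1 − χφ⁻¹(q)q^{1−s})·L(χφ, s)·L(χφ⁻¹, s−1). -/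
open scoped BigOperators

section AuxEis

open Complex LSeries Finset
open scoped LSeries.notation

private lemma natCast_cpow_mul' (a b : ℕ) (s : ℂ) :
    ((a * b : ℕ) : ℂ) ^ s = (a : ℂ) ^ s * (b : ℂ) ^ s := by
  push_cast
  exact natCast_mul_natCast_cpow a b s

/-- The monoid hom `n ↦ (n : ℂ)^(-s)`. -/
private noncomputable def cpowHom (s : ℂ) : ℕ →* ℂ where
  toFun n := (n : ℂ) ^ (-s)
  map_one' := by simp
  map_mul' a b := natCast_cpow_mul' a b (-s)

@[simp] private lemma cpowHom_apply (s : ℂ) (n : ℕ) : cpowHom s n = (n : ℂ) ^ (-s) := rfl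

/-- The monoid hom `n ↦ χ (n : ZMod m)`. -/
private noncomputable def charHom {m : ℕ} (χ : DirichletCharacter ℂ m) : ℕ →* ℂ where
  toFun n := χ (n : ZMod m)
  map_one' := by push_cast; exact map_one χ
  map_mul' a b := by push_cast; exact map_mul χ _ _

@[simp] private lemma charHom_apply {m : ℕ} (χ : DirichletCharacter ℂ m) (n : ℕ) :
    charHom χ n = χ (n : ZMod m) := rfl

private lemma squarefree_prod_primes {s : Finset ℕ} (hs : ∀ p ∈ s, p.Prime) :
    Squarefree (∏ p ∈ s, p) := by
  induction s using Finset.cons_induction with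
  | empty => simpa using squarefree_one
  | cons p t hns ih =>
    rw [Finset.prod_cons]
    have hp := hs p (Finset.mem_cons_self p t)
    have ht : ∀ q ∈ t, q.Prime := fun q hq => hs q (Finset.mem_cons_of_mem hq)
    have hcop : Nat.Coprime p (∏ q ∈ t, q) :=
      Nat.Coprime.prod_right fun q hq =>
        (Nat.coprime_primes hp (ht q hq)).mpr (fun h => hns (h ▸ hq))
    exact (Nat.squarefree_mul hcop).mpr ⟨hp.squarefree, ih ht⟩

private lemma dilate_key (X : ℕ →* ℂ) {c : ℕ} (hc : c ≠ 0) (G : ℕ → ℂ) (s : ℂ) :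
    ((∑' n : ℕ, X (n + 1) * (if c ∣ (n + 1) then G ((n + 1) / c) else 0) *
        ((n + 1 : ℕ) : ℂ) ^ (-s)) =
      X c * (c : ℂ) ^ (-s) * ∑' k : ℕ, X (k + 1) * G (k + 1) * ((k + 1 : ℕ) : ℂ) ^ (-s)) ∧
    (Summable (fun k : ℕ => X (k + 1) * G (k + 1) * ((k + 1 : ℕ) : ℂ) ^ (-s)) →
      Summable (fun n : ℕ => X (n + 1) * (if c ∣ (n + 1) then G ((n + 1) / c) else 0) *
        ((n + 1 : ℕ) : ℂ) ^ (-s))) := by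
  set F : ℕ → ℂ := fun n => X (n + 1) * (if c ∣ (n + 1) then G ((n + 1) / c) else 0) *
      ((n + 1 : ℕ) : ℂ) ^ (-s) with hF
  set i : ℕ → ℕ := fun k => c * (k + 1) - 1 with hi
  have hipos : ∀ k : ℕ, i k + 1 = c * (k + 1) := by
    intro k
    have h1 : 1 ≤ c * (k + 1) := Nat.one_le_iff_ne_zero.mpr (by positivity)
    simp only [hi]
    omega
  have hinj : Function.Injective i := by
    intro a b h
    have h2 : c * (a + 1) = c * (b + 1) := by rw [← hipos a, ← hipos b, h]
    have := Nat.eq_of_mul_eq_mul_left (Nat.pos_of_ne_zero hc) h2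
    omega
  have hsupp : Function.support F ⊆ Set.range i := by
    intro n hn
    by_cases hdvd : c ∣ (n + 1)
    · obtain ⟨t, ht⟩ := hdvd
      have ht1 : 1 ≤ t := by
        rcases Nat.eq_zero_or_pos t with h0 | h1
        · rw [h0, Nat.mul_zero] at ht; omega
        · exact h1
      refine ⟨t - 1, ?_⟩
      have htt : t - 1 + 1 = t := by omega
      simp only [hi, htt]
      omega
    · exact absurd (by simp [hF, if_neg hdvd]) hn
  have hkey : ∀ k : ℕ, F (i k) =
      X c * (c : ℂ) ^ (-s) * (X (k + 1) * G (k + 1) * ((k + 1 : ℕ) : ℂ) ^ (-s)) := by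
    intro k
    have hdvd : c ∣ c * (k + 1) := Dvd.intro _ rfl
    have hdiv : c * (k + 1) / c = k + 1 := Nat.mul_div_cancel_left _ (Nat.pos_of_ne_zero hc)
    simp only [hF, hipos k, if_pos hdvd, hdiv, map_mul]
    rw [natCast_cpow_mul' c (k + 1) (-s)]
    ring
  constructor
  · calc (∑' n, F n) = ∑' k, F (i k) := (hinj.tsum_eq hsupp).symm
      _ = ∑' k, X c * (c : ℂ) ^ (-s) *
            (X (k + 1) * G (k + 1) * ((k + 1 : ℕ) : ℂ) ^ (-s)) := tsum_congr hkey
      _ = _ := tsum_mul_left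
  · intro hsum
    rw [← Function.Injective.summable_iff hinj (fun x hx => Function.notMem_support.mp
      (fun hmem => hx (hsupp hmem)))]
    exact Summable.congr (hsum.mul_left (X c * (c : ℂ) ^ (-s))) (fun k => (hkey k).symm)

end AuxEis

/-- The `n`-th Fourier coefficient of `E_{φ,M,L}(z) = D·E_{φ,T₁,T₂}(Dz)`, where
`D = ML/(T₁T₂)`: `A(n) = D·a(n/D)` if `D ∣ n` and `0` otherwise. -/
noncomputable def fullCoeff (f : ℕ) (φ : DirichletCharacter ℂ f) (T₁ T₂ D : ℕ) (n : ℕ) : ℂ :=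
  if D ∣ n then (D : ℂ) * refCoeff f φ T₁ T₂ (n / D) else 0

section MainAux

open Complex LSeries Finset

/-- Twisted coefficients are bounded, so summable for `1 < re s`. -/
private lemma twist_summable {m f : ℕ} (χ : DirichletCharacter ℂ m)
    (ψ : DirichletCharacter ℂ f) {s : ℂ} (hs : 1 < s.re) :
    LSeriesSummable (fun n : ℕ => charHom χ n * charHom ψ n) s := by
  refine LSeriesSummable_of_bounded_of_one_lt_re (m := 1) (fun n _ => ?_) hs
  simp only [charHom_apply]
  calc ‖χ (n : ZMod m) * ψ (n : ZMod f)‖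
      = ‖χ (n : ZMod m)‖ * ‖ψ (n : ZMod f)‖ := by
        rw [norm_mul]
    _ ≤ 1 * 1 := mul_le_mul (χ.norm_le_one _) (ψ.norm_le_one _) (norm_nonneg _) zero_le_one
    _ = 1 := one_mul 1

end MainAux

/-- The twisted `L`-series of `E_{φ,M,L}` factors as
`L(E_{φ,M,L}, χ, s) = χ(D)·D^{1−s}·∏_{l∣T₁}(1 − χφ(l)l^{−s})·∏_{q∣T₂}(1 − χφ⁻¹(q)q^{1−s})
·L(χφ, s)·L(χφ⁻¹, s−1)` for `Re(s) > 2`. -/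
theorem fullCoeff_twisted_LSeries_factorization
    (f : ℕ) (hf : 1 < f) (φ : DirichletCharacter ℂ f)
    (hφ : φ ≠ 1) (hφprim : φ.IsPrimitive)
    (N M L : ℕ) (hN : 0 < N) (hM : 0 < M) (hL : 0 < L)
    (hdvd : f ^ 2 * M * L ∣ N) (hcop : Nat.Coprime (f * M) L)
    (T₁ T₂ D : ℕ)
    (hT₁ : T₁ = ∏ l ∈ M.primeFactors.filter (fun l => ¬ l ∣ f), l)
    (hT₂ : T₂ = ∏ q ∈ L.primeFactors, q)
    (hD : D = M * L / (T₁ * T₂))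
    (m : ℕ) (χ : DirichletCharacter ℂ m) (hm : Nat.Coprime m N)
    (s : ℂ) (hs : 2 < s.re) :
    (∑' n : ℕ, χ ((n + 1 : ℕ) : ZMod m) * fullCoeff f φ T₁ T₂ D (n + 1) *
        ((n + 1 : ℕ) : ℂ) ^ (-s)) =
      χ ((D : ℕ) : ZMod m) * (D : ℂ) ^ (1 - s) *
        (∏ l ∈ T₁.primeFactors,
          (1 - χ ((l : ℕ) : ZMod m) * φ ((l : ℕ) : ZMod f) * (l : ℂ) ^ (-s))) *
        (∏ q ∈ T₂.primeFactors,
          (1 - χ ((q : ℕ) : ZMod m) * φ⁻¹ ((q : ℕ) : ZMod f) * (q : ℂ) ^ (1 - s))) *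
        (∑' n : ℕ, χ ((n + 1 : ℕ) : ZMod m) * φ ((n + 1 : ℕ) : ZMod f) *
          ((n + 1 : ℕ) : ℂ) ^ (-s)) *
        (∑' n : ℕ, χ ((n + 1 : ℕ) : ZMod m) * φ⁻¹ ((n + 1 : ℕ) : ZMod f) *
          ((n + 1 : ℕ) : ℂ) ^ (1 - s)) := by
  classical
  -- ## Setup : number-theoretic facts
  have hT₁prime : ∀ p ∈ M.primeFactors.filter (fun l => ¬ l ∣ f), p.Prime :=
    fun p hp => Nat.prime_of_mem_primeFactors (Finset.mem_filter.mp hp).1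
  have hsqT₁ : Squarefree T₁ := hT₁ ▸ squarefree_prod_primes hT₁prime
  have hsqT₂ : Squarefree T₂ :=
    hT₂ ▸ squarefree_prod_primes (fun q hq => Nat.prime_of_mem_primeFactors hq)
  have hT₁dvdM : T₁ ∣ M := by
    rw [hT₁]
    exact dvd_trans (Finset.prod_dvd_prod_of_subset _ _ _ (Finset.filter_subset _ _))
      (Nat.prod_primeFactors_dvd M)
  have hT₂dvdL : T₂ ∣ L := hT₂ ▸ Nat.prod_primeFactors_dvd L
  have hMLcop : Nat.Coprime M L := Nat.Coprime.coprime_dvd_left (dvd_mul_left M f) hcop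
  have hcopT : Nat.Coprime T₁ T₂ :=
    Nat.Coprime.coprime_dvd_left hT₁dvdM (Nat.Coprime.coprime_dvd_right hT₂dvdL hMLcop)
  have hsqT : Squarefree (T₁ * T₂) := (Nat.squarefree_mul hcopT).mpr ⟨hsqT₁, hsqT₂⟩
  have hT₁0 : T₁ ≠ 0 := hsqT₁.ne_zero
  have hT₂0 : T₂ ≠ 0 := hsqT₂.ne_zero
  have hT0 : T₁ * T₂ ≠ 0 := mul_ne_zero hT₁0 hT₂0
  have hD0 : D ≠ 0 := by
    have hdvd' : T₁ * T₂ ∣ M * L := mul_dvd_mul hT₁dvdM hT₂dvdL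
    rw [hD]
    exact (Nat.div_pos (Nat.le_of_dvd (Nat.mul_pos hM hL) hdvd') (Nat.pos_of_ne_zero hT0)).ne'
  have h1s : 1 < s.re := by linarith
  have hs1 : 1 < (s - 1).re := by
    rw [Complex.sub_re, Complex.one_re]; linarith
  -- ## notation
  set X : ℕ →* ℂ := charHom χ with hXdef
  set Φ : ℕ →* ℂ := charHom φ with hΦdef
  set Φ' : ℕ →* ℂ := charHom φ⁻¹ with hΦ'def
  set b : ℕ → ℂ := eisCoeff f φ with hbdef
  set a : ℕ → ℂ := refCoeff f φ T₁ T₂ with hadef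
  set f₀ : ℕ → ℂ := fun n => X n * Φ n with hf₀def
  set g₀ : ℕ → ℂ := fun n => X n * Φ' n * n with hg₀def
  -- ## summability
  have hf₀sum : LSeriesSummable f₀ s := twist_summable χ φ h1s
  have hXΦ'sum : LSeriesSummable (fun n => X n * Φ' n) (s - 1) := twist_summable χ φ⁻¹ hs1
  have hterm_g₀ : ∀ n : ℕ, LSeries.term g₀ s n =
      LSeries.term (fun n => X n * Φ' n) (s - 1) n := by
    intro n
    rcases eq_or_ne n 0 with rfl | hn
    · simp [LSeries.term_zero]
    · have hn0 : (n : ℂ) ≠ 0 := Nat.cast_ne_zero.mpr hn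
      rw [LSeries.term_of_ne_zero hn, LSeries.term_of_ne_zero hn, hg₀def,
        Complex.cpow_sub _ _ hn0, Complex.cpow_one, div_div_eq_mul_div]
  have hg₀sum : LSeriesSummable g₀ s :=
    Summable.congr hXΦ'sum (fun n => (hterm_g₀ n).symm)
  -- ## convolution identity
  have hconv : ∀ n : ℕ, X n * b n = (LSeries.convolution f₀ g₀) n := by
    intro n
    rcases eq_or_ne n 0 with rfl | hn
    · simp [hbdef, eisCoeff, LSeries.convolution_def]
    · have hc := congrFun (LSeries.convolution_def f₀ g₀) n
      rw [hc, Nat.sum_divisorsAntidiagonal' (f := fun x y => f₀ x * g₀ y),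
        hbdef, eisCoeff, Finset.mul_sum]
      refine Finset.sum_congr rfl (fun d hd => ?_)
      have hdvd : d ∣ n := (Nat.mem_divisors.mp hd).1
      have hXn : X n = X (n / d) * X d := by rw [← map_mul X, Nat.div_mul_cancel hdvd]
      rw [hXn, hf₀def, hg₀def]
      show X (n / d) * X d * (Φ (n / d) * Φ' d * d) =
        X (n / d) * Φ (n / d) * (X d * Φ' d * d)
      ring
  have hconvsum : LSeriesSummable (LSeries.convolution f₀ g₀) s := hf₀sum.convolution hg₀sum
  have hbsum : Summable (fun k : ℕ => X (k + 1) * b (k + 1) * ((k + 1 : ℕ) : ℂ) ^ (-s)) := by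
    have h2 := (summable_nat_add_iff 1).mpr hconvsum
    refine h2.congr (fun k => ?_)
    rw [LSeries.term_of_ne_zero (Nat.succ_ne_zero k), ← hconv, div_eq_mul_inv,
      ← Complex.cpow_neg]
  have hSb : (∑' k : ℕ, X (k + 1) * b (k + 1) * ((k + 1 : ℕ) : ℂ) ^ (-s)) =
      LSeries f₀ s * LSeries g₀ s := by
    rw [← LSeries_convolution' hf₀sum hg₀sum, LSeries, Summable.tsum_eq_zero_add hconvsum,
      LSeries.term_zero, zero_add]
    refine tsum_congr (fun k => ?_)
    rw [LSeries.term_of_ne_zero (Nat.succ_ne_zero k), ← hconv, div_eq_mul_inv,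
      ← Complex.cpow_neg]
  -- ## identification of the statement's series with L-series
  have hLf₀ : LSeries f₀ s =
      ∑' n : ℕ, χ ((n + 1 : ℕ) : ZMod m) * φ ((n + 1 : ℕ) : ZMod f) *
        ((n + 1 : ℕ) : ℂ) ^ (-s) := by
    rw [LSeries, Summable.tsum_eq_zero_add hf₀sum, LSeries.term_zero, zero_add]
    refine tsum_congr (fun k => ?_)
    rw [LSeries.term_of_ne_zero (Nat.succ_ne_zero k)]
    simp only [hf₀def, hXdef, hΦdef, charHom_apply]
    rw [div_eq_mul_inv, ← Complex.cpow_neg]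
  have hLg₀ : LSeries g₀ s =
      ∑' n : ℕ, χ ((n + 1 : ℕ) : ZMod m) * φ⁻¹ ((n + 1 : ℕ) : ZMod f) *
        ((n + 1 : ℕ) : ℂ) ^ (1 - s) := by
    rw [LSeries, Summable.tsum_eq_zero_add hg₀sum, LSeries.term_zero, zero_add]
    refine tsum_congr (fun k => ?_)
    have hk0 : ((k + 1 : ℕ) : ℂ) ≠ 0 := Nat.cast_ne_zero.mpr (Nat.succ_ne_zero k)
    rw [LSeries.term_of_ne_zero (Nat.succ_ne_zero k)]
    simp only [hg₀def, hXdef, hΦ'def, charHom_apply]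
    rw [show (1 : ℂ) - s = 1 + -s by ring, Complex.cpow_add _ _ hk0, Complex.cpow_one,
      Complex.cpow_neg, div_eq_mul_inv]
    ring
  -- ## expansion of the refined coefficients
  set C : ℕ → ℂ := fun e => ((ArithmeticFunction.moebius e : ℤ) : ℂ) *
      (∏ l ∈ (Nat.gcd e T₁).primeFactors, Φ l) *
      (∏ q ∈ (Nat.gcd e T₂).primeFactors, (q : ℂ) * Φ' q) with hCdef
  have hstep2 : (∑' k : ℕ, X (k + 1) * a (k + 1) * ((k + 1 : ℕ) : ℂ) ^ (-s))
      = (∑ e ∈ (T₁ * T₂).divisors, C e * (X e * (e : ℂ) ^ (-s))) *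
        (∑' k : ℕ, X (k + 1) * b (k + 1) * ((k + 1 : ℕ) : ℂ) ^ (-s)) := by
    have hswap : ∀ k : ℕ, X (k + 1) * a (k + 1) * ((k + 1 : ℕ) : ℂ) ^ (-s)
        = ∑ e ∈ (T₁ * T₂).divisors, C e *
            (X (k + 1) * (if e ∣ (k + 1) then b ((k + 1) / e) else 0) *
              ((k + 1 : ℕ) : ℂ) ^ (-s)) := by
      intro k
      rw [hadef, refCoeff, Finset.mul_sum, Finset.sum_mul]
      refine Finset.sum_congr rfl (fun e he => ?_)
      simp only [hCdef, hΦdef, hΦ'def, charHom_apply, hbdef]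
      ring
    rw [tsum_congr hswap, Summable.tsum_finsetSum (fun e he => Summable.mul_left _
      ((dilate_key X (Nat.pos_of_mem_divisors he).ne' b s).2 hbsum))]
    rw [Finset.sum_mul]
    refine Finset.sum_congr rfl (fun e he => ?_)
    rw [tsum_mul_left, (dilate_key X (Nat.pos_of_mem_divisors he).ne' b s).1]
    ring
  -- ## the Euler factors
  set w : ℕ → ℂ := fun p => (if p ∈ T₁.primeFactors then Φ p else (p : ℂ) * Φ' p) *
      (X p * (p : ℂ) ^ (-s)) with hwdef
  set Fw : ArithmeticFunction ℂ := ArithmeticFunction.prodPrimeFactors w with hFwdef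
  have hFwmult : Fw.IsMultiplicative := ArithmeticFunction.IsMultiplicative.prodPrimeFactors w
  have hdisjT : Disjoint T₁.primeFactors T₂.primeFactors :=
    Nat.Coprime.disjoint_primeFactors hcopT
  have hFw_prime : ∀ p : ℕ, p.Prime → Fw p = w p := by
    intro p hp
    rw [hFwdef, ArithmeticFunction.prodPrimeFactors_apply hp.pos.ne',
      Nat.Prime.primeFactors hp, Finset.prod_singleton]
  have hEuler : (∑ e ∈ (T₁ * T₂).divisors, C e * (X e * (e : ℂ) ^ (-s)))
      = (∏ l ∈ T₁.primeFactors,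
          (1 - χ ((l : ℕ) : ZMod m) * φ ((l : ℕ) : ZMod f) * (l : ℂ) ^ (-s))) *
        (∏ q ∈ T₂.primeFactors,
          (1 - χ ((q : ℕ) : ZMod m) * φ⁻¹ ((q : ℕ) : ZMod f) * (q : ℂ) ^ (1 - s))) := by
    have h0 := ArithmeticFunction.IsMultiplicative.prodPrimeFactors_one_sub_of_squarefree
      Fw hFwmult hsqT
    have hL : (∑ e ∈ (T₁ * T₂).divisors, C e * (X e * (e : ℂ) ^ (-s)))
        = ∑ d ∈ (T₁ * T₂).divisors, ((ArithmeticFunction.moebius d : ℤ) : ℂ) * Fw d := by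
      refine Finset.sum_congr rfl (fun e he => ?_)
      obtain ⟨hedvd, -⟩ := Nat.mem_divisors.mp he
      have he0 : e ≠ 0 := (Nat.pos_of_mem_divisors he).ne'
      have hesq : Squarefree e := hsqT.squarefree_of_dvd hedvd
      have hA : (Nat.gcd e T₁).primeFactors = e.primeFactors ∩ T₁.primeFactors :=
        Nat.primeFactors_gcd he0 hT₁0
      have hB : (Nat.gcd e T₂).primeFactors = e.primeFactors ∩ T₂.primeFactors :=
        Nat.primeFactors_gcd he0 hT₂0
      have hsub : e.primeFactors ⊆ T₁.primeFactors ∪ T₂.primeFactors := by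
        rw [← Nat.primeFactors_mul hT₁0 hT₂0]
        exact Nat.primeFactors_mono hedvd hT0
      have hunion : e.primeFactors ∩ T₁.primeFactors ∪ e.primeFactors ∩ T₂.primeFactors
          = e.primeFactors := by
        rw [← Finset.inter_union_distrib_left]
        exact Finset.inter_eq_left.mpr hsub
      have hdisjAB : Disjoint (e.primeFactors ∩ T₁.primeFactors)
          (e.primeFactors ∩ T₂.primeFactors) :=
        hdisjT.mono Finset.inter_subset_right Finset.inter_subset_right
      have h1 : (∏ p ∈ e.primeFactors, X p) = X e := by
        conv_rhs => rw [← Nat.prod_primeFactors_of_squarefree hesq]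
        exact (map_prod X (fun p => p) e.primeFactors).symm
      have h2 : (∏ p ∈ e.primeFactors, (p : ℂ) ^ (-s)) = (e : ℂ) ^ (-s) := by
        have h2' := map_prod (cpowHom s) (fun p => p) e.primeFactors
        simp only [cpowHom_apply] at h2'
        conv_rhs => rw [← Nat.prod_primeFactors_of_squarefree hesq]
        exact h2'.symm
      have hXe : (∏ p ∈ e.primeFactors, (X p * (p : ℂ) ^ (-s))) = X e * (e : ℂ) ^ (-s) := by
        rw [Finset.prod_mul_distrib, h1, h2]
      have hu : (∏ p ∈ e.primeFactors,
            (if p ∈ T₁.primeFactors then Φ p else (p : ℂ) * Φ' p))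
          = (∏ l ∈ (Nat.gcd e T₁).primeFactors, Φ l) *
            (∏ q ∈ (Nat.gcd e T₂).primeFactors, ((q : ℂ) * Φ' q)) := by
        conv_lhs => rw [← hunion]
        rw [Finset.prod_union hdisjAB, hA, hB]
        congr 1
        · exact Finset.prod_congr rfl (fun p hp => if_pos (Finset.mem_inter.mp hp).2)
        · exact Finset.prod_congr rfl (fun p hp => if_neg
            (fun hc => absurd (Finset.mem_inter.mp hp).2 (Finset.disjoint_left.mp hdisjT hc)))
      have hFwe : Fw e = (∏ l ∈ (Nat.gcd e T₁).primeFactors, Φ l) *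
          (∏ q ∈ (Nat.gcd e T₂).primeFactors, ((q : ℂ) * Φ' q)) * (X e * (e : ℂ) ^ (-s)) := by
        rw [hFwdef, ArithmeticFunction.prodPrimeFactors_apply he0]
        rw [Finset.prod_mul_distrib, hXe, hu]
      rw [hFwe]
      simp only [hCdef]
      ring
    rw [hL, ← h0, Nat.primeFactors_mul hT₁0 hT₂0, Finset.prod_union hdisjT]
    congr 1
    · refine Finset.prod_congr rfl (fun p hp => ?_)
      have hpp : p.Prime := Nat.prime_of_mem_primeFactors hp
      rw [hFw_prime p hpp]
      simp only [hwdef, if_pos hp, hXdef, hΦdef, charHom_apply]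
      ring
    · refine Finset.prod_congr rfl (fun p hp => ?_)
      have hpp : p.Prime := Nat.prime_of_mem_primeFactors hp
      have hpn : p ∉ T₁.primeFactors :=
        fun hc => absurd hp (Finset.disjoint_left.mp hdisjT hc)
      have hp0 : (p : ℂ) ≠ 0 := Nat.cast_ne_zero.mpr hpp.pos.ne'
      rw [hFw_prime p hpp]
      simp only [hwdef, if_neg hpn, hXdef, hΦ'def, charHom_apply]
      rw [show (1 : ℂ) - s = 1 + -s by ring, Complex.cpow_add _ _ hp0, Complex.cpow_one,
        Complex.cpow_neg]
      ring
  -- ## assembly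
  have hDC : ((D : ℕ) : ℂ) ≠ 0 := Nat.cast_ne_zero.mpr hD0
  have hpowD : ((D : ℕ) : ℂ) ^ ((1 : ℂ) - s) = (D : ℂ) * (D : ℂ) ^ (-s) := by
    rw [show (1 : ℂ) - s = 1 + -s by ring, Complex.cpow_add _ _ hDC, Complex.cpow_one]
  calc (∑' n : ℕ, χ ((n + 1 : ℕ) : ZMod m) * fullCoeff f φ T₁ T₂ D (n + 1) *
          ((n + 1 : ℕ) : ℂ) ^ (-s))
      = ∑' n : ℕ, X (n + 1) *
          (if D ∣ (n + 1) then ((fun j => (D : ℂ) * a j) ((n + 1) / D)) else 0) *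
          ((n + 1 : ℕ) : ℂ) ^ (-s) := tsum_congr (fun n => rfl)
    _ = X D * (D : ℂ) ^ (-s) *
          ∑' k : ℕ, X (k + 1) * ((fun j => (D : ℂ) * a j) (k + 1)) *
            ((k + 1 : ℕ) : ℂ) ^ (-s) := (dilate_key X hD0 (fun j => (D : ℂ) * a j) s).1
    _ = X D * (D : ℂ) ^ (-s) *
          ((D : ℂ) * ∑' k : ℕ, X (k + 1) * a (k + 1) * ((k + 1 : ℕ) : ℂ) ^ (-s)) := by
        congr 1
        rw [← tsum_mul_left]
        refine tsum_congr (fun k => ?_)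
        show X (k + 1) * ((D : ℂ) * a (k + 1)) * ((k + 1 : ℕ) : ℂ) ^ (-s) = _
        ring
    _ = X D * (D : ℂ) ^ (-s) * ((D : ℂ) *
          ((∑ e ∈ (T₁ * T₂).divisors, C e * (X e * (e : ℂ) ^ (-s))) *
            (LSeries f₀ s * LSeries g₀ s))) := by rw [hstep2, hSb]
    _ = _ := by
        rw [hEuler, hLf₀, hLg₀, hpowD]
        simp only [hXdef, charHom_apply]
        ring
end

section
/- Let N ≥ 2 and let γ ∈ SL₂(ℤ) have both off-diagonal entries divisible by N, i.e. γ ∈ Γ₀′(N). Then γ^{φ(N²)/2} ∈ Γ′(N); that is, the off-diagonal entries of γ^{φ(N²)/2} are divisible by N and each of its diagonal entries is congruent to 1 or −1 modulo N². -/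
-- Euler's theorem for integers
lemma euler_int {n : ℕ} (hn : 1 < n) {t : ℤ} (ht : IsCoprime t (n : ℤ)) :
    (n : ℤ) ∣ t ^ Nat.totient n - 1 := by
  haveI : NeZero n := ⟨by omega⟩
  obtain ⟨u, v, huv⟩ := ht
  have h1 : ((t : ZMod n)) * (u : ZMod n) = 1 := by
    have := congrArg (fun z : ℤ => (z : ZMod n)) huv
    push_cast at this
    rw [ZMod.natCast_self, mul_zero, add_zero] at this
    rw [mul_comm]; exact this
  have hu : IsUnit ((t : ℤ) : ZMod n) := IsUnit.of_mul_eq_one _ h1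
  obtain ⟨w, hw⟩ := hu
  have hpw := ZMod.pow_totient w
  have h2 : ((t : ℤ) : ZMod n) ^ Nat.totient n = 1 := by
    rw [← hw, ← Units.val_pow_eq_pow_val, hpw, Units.val_one]
  have h3 : ((t ^ Nat.totient n - 1 : ℤ) : ZMod n) = 0 := by
    push_cast
    rw [h2, sub_self]
  exact (ZMod.intCast_zmod_eq_zero_iff_dvd _ _).mp h3


-- square roots of 1 mod odd prime powers
lemma odd_pp_sq {p : ℕ} (hp : p.Prime) (hodd : Odd p) (m : ℕ) {x : ℤ}
    (h : (p : ℤ) ^ m ∣ x ^ 2 - 1) : (p : ℤ) ^ m ∣ x - 1 ∨ (p : ℤ) ^ m ∣ x + 1 := by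
  have hpz : Prime (p : ℤ) := Int.prime_iff_natAbs_prime.mpr (by simpa using hp)
  have hfac : x ^ 2 - 1 = (x - 1) * (x + 1) := by ring
  rw [hfac] at h
  by_cases hd : (p : ℤ) ∣ x - 1
  · -- p ∤ x + 1 since p odd
    have hnd : ¬ (p : ℤ) ∣ x + 1 := by
      intro hd2
      have : (p : ℤ) ∣ 2 := by
        have := dvd_sub hd2 hd
        simpa using this
      have hp2 : (p : ℕ) ∣ 2 := by exact_mod_cast this
      have := (Nat.prime_dvd_prime_iff_eq hp Nat.prime_two).mp hp2
      exact (Nat.not_odd_iff_even.mpr (this ▸ even_two)) hodd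
    have hco : IsCoprime ((p : ℤ) ^ m) (x + 1) :=
      IsCoprime.pow_left (hpz.coprime_iff_not_dvd.mpr hnd)
    exact Or.inl (hco.dvd_of_dvd_mul_right h)
  · have hco : IsCoprime ((p : ℤ) ^ m) (x - 1) :=
      IsCoprime.pow_left (hpz.coprime_iff_not_dvd.mpr hd)
    exact Or.inr (hco.dvd_of_dvd_mul_left h)

lemma two_pow_aux (j : ℕ) {x : ℤ} (hx : Odd x) :
    (2 : ℤ) ^ (j + 3) ∣ x ^ (2 ^ (j + 1)) - 1 := by
  induction j with
  | zero =>
    obtain ⟨y, rfl⟩ := hx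
    obtain ⟨z, hz⟩ := Int.even_mul_succ_self y
    exact ⟨z, by push_cast; linear_combination (4 : ℤ) * hz⟩
  | succ j ih =>
    have hsq : x ^ (2 ^ (j + 2)) - 1 = (x ^ (2 ^ (j + 1)) - 1) * (x ^ (2 ^ (j + 1)) + 1) := by
      rw [show (2 : ℕ) ^ (j + 2) = 2 ^ (j + 1) * 2 by ring, pow_mul]; ring
    rw [hsq, show j + 1 + 3 = (j + 3) + 1 by ring, pow_succ]
    have he : (2 : ℤ) ∣ x ^ (2 ^ (j + 1)) + 1 := by
      obtain ⟨c, hc⟩ := hx.pow (n := 2 ^ (j + 1))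
      exact ⟨c + 1, by omega⟩
    exact mul_dvd_mul ih he



lemma key_lemma (N : ℕ) (hN : 2 ≤ N) {t : ℤ} (ht : IsCoprime t (N : ℤ)) :
    (N : ℤ) ^ 2 ∣ t ^ (Nat.totient (N ^ 2) / 2) - 1 ∨
    (N : ℤ) ^ 2 ∣ t ^ (Nat.totient (N ^ 2) / 2) + 1 := by
  have hN2 : 2 < N ^ 2 := by nlinarith
  have heven : Even (Nat.totient (N ^ 2)) := Nat.totient_even hN2
  obtain ⟨r, hr⟩ := heven
  have h2e : 2 * (Nat.totient (N ^ 2) / 2) = Nat.totient (N ^ 2) := by omega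
  set e := Nat.totient (N ^ 2) / 2 with he
  have htN2 : IsCoprime t ((N ^ 2 : ℕ) : ℤ) := by push_cast; exact ht.pow_right
  have heuler : ((N ^ 2 : ℕ) : ℤ) ∣ t ^ Nat.totient (N ^ 2) - 1 := euler_int (by omega) htN2
  obtain ⟨p, k, hp, hk0, hpdvd, b, hab, hcop⟩ :
      ∃ p k, p.Prime ∧ 0 < k ∧ p ∣ N ∧ ∃ b, p ^ k * b = N ∧ Nat.Coprime (p ^ k) b := by
    have hp' : (N.minFac).Prime := Nat.minFac_prime (by omega)
    exact ⟨N.minFac, N.factorization N.minFac, hp',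
      hp'.factorization_pos_of_dvd (by omega) (Nat.minFac_dvd N), Nat.minFac_dvd N,
      N / N.minFac ^ N.factorization N.minFac, Nat.ordProj_mul_ordCompl_eq_self N N.minFac,
      Nat.Coprime.pow_left _ (Nat.coprime_ordCompl hp' (by omega))⟩
  by_cases hb1 : b = 1
  · -- N = p ^ k is a prime power
    have hNa : N = p ^ k := by rw [← hab, hb1, mul_one]
    have hNZ : (N : ℤ) ^ 2 = (p : ℤ) ^ (2 * k) := by
      have h1 : (N : ℤ) = (p : ℤ) ^ k := by exact_mod_cast congrArg (Nat.cast (R := ℤ)) hNa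
      rw [h1, ← pow_mul, mul_comm]
    rcases hp.eq_two_or_odd' with hp2 | hodd
    · -- p = 2, N = 2 ^ k
      subst hp2
      push_cast at hNZ
      have hodd_t : Odd t := by
        rcases Int.even_or_odd t with hev | hodd'
        · exfalso
          obtain ⟨c, hc⟩ := hev
          have h2d : (2 : ℤ) ∣ t := ⟨c, by omega⟩
          have h2N : (2 : ℤ) ∣ (N : ℤ) :=
            Int.natCast_dvd_natCast.mpr (hNa ▸ dvd_pow_self 2 (by omega : k ≠ 0))
          have := ht.isUnit_of_dvd' h2d h2N
          rw [Int.isUnit_iff] at this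
          omega
        · exact hodd'
      have hphi : Nat.totient (N ^ 2) = 2 ^ (2 * k - 1) := by
        have hexp : k * 2 - 1 = 2 * k - 1 := by omega
        rw [hNa, ← pow_mul, Nat.totient_prime_pow Nat.prime_two (by omega), hexp]
        norm_num
      have hee : e = 2 ^ (2 * k - 2) := by
        have h1 : 2 * e = 2 ^ (2 * k - 1) := by rw [h2e, hphi]
        have h2 : (2 : ℕ) ^ (2 * k - 1) = 2 * 2 ^ (2 * k - 2) := by
          rw [← pow_succ']
          congr 1
          omega
        omega
      rcases Nat.lt_or_ge k 2 with hk1 | hk2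
      · -- k = 1, N = 2
        have hk1' : k = 1 := by omega
        have hee1 : e = 1 := by rw [hee, hk1']; norm_num
        have hNZ4 : (N : ℤ) ^ 2 = 4 := by rw [hNZ, hk1']; norm_num
        obtain ⟨c, hc⟩ := hodd_t
        rw [hee1, hNZ4, pow_one]
        omega
      · -- k ≥ 2
        left
        have hdv := two_pow_aux (2 * k - 4 + 1) hodd_t
        have h1 : 2 * k - 4 + 1 + 3 = 2 * k := by omega
        have h2 : (2 : ℕ) ^ (2 * k - 4 + 1 + 1) = 2 ^ (2 * k - 2) := by congr 1; omega
        rw [h1, h2, ← hee, ← hNZ] at hdv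
        exact hdv
    · -- p odd
      have hx : (p : ℤ) ^ (2 * k) ∣ (t ^ e) ^ 2 - 1 := by
        have h2 : (t ^ e) ^ 2 - 1 = t ^ Nat.totient (N ^ 2) - 1 := by
          rw [← pow_mul, mul_comm, h2e]
        rw [h2, ← hNZ]
        have hcast : ((N ^ 2 : ℕ) : ℤ) = (N : ℤ) ^ 2 := by push_cast; ring
        rwa [hcast] at heuler
      rw [hNZ]
      exact odd_pp_sq hp hodd (2 * k) hx
  · -- composite case
    left
    set a := p ^ k with ha
    have ha2 : 2 ≤ a := hp.two_le.trans (Nat.le_self_pow (by omega) p)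
    have hb0 : b ≠ 0 := by intro h0; rw [h0, mul_zero] at hab; omega
    have hb2 : 2 ≤ b := by omega
    have hNab : N = a * b := hab.symm
    have hphi : Nat.totient (N ^ 2) = Nat.totient (a ^ 2) * Nat.totient (b ^ 2) := by
      rw [hNab, mul_pow, Nat.totient_mul (Nat.Coprime.pow _ _ hcop)]
    have hevena : Even (Nat.totient (a ^ 2)) := Nat.totient_even (by nlinarith)
    have hevenb : Even (Nat.totient (b ^ 2)) := Nat.totient_even (by nlinarith)
    obtain ⟨fa, hfa⟩ := hevena
    obtain ⟨fb, hfb⟩ := hevenb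
    have hea : Nat.totient (a ^ 2) ∣ e := by
      refine ⟨fb, ?_⟩
      have h1 : 2 * e = 2 * (Nat.totient (a ^ 2) * fb) := by rw [h2e, hphi, hfb]; ring
      omega
    have heb : Nat.totient (b ^ 2) ∣ e := by
      refine ⟨fa, ?_⟩
      have h1 : 2 * e = 2 * (Nat.totient (b ^ 2) * fa) := by rw [h2e, hphi, hfa]; ring
      omega
    have hdvd : ∀ c : ℕ, 2 ≤ c → (c : ℤ) ∣ (N : ℤ) → Nat.totient (c ^ 2) ∣ e →
        ((c ^ 2 : ℕ) : ℤ) ∣ t ^ e - 1 := by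
      intro c hc hcd hce
      have htc : IsCoprime t ((c ^ 2 : ℕ) : ℤ) := by
        have h1 : IsCoprime t (c : ℤ) := ht.of_isCoprime_of_dvd_right hcd
        push_cast
        exact h1.pow_right
      have h1 : ((c ^ 2 : ℕ) : ℤ) ∣ t ^ Nat.totient (c ^ 2) - 1 := euler_int (by nlinarith) htc
      obtain ⟨g, hg⟩ := hce
      calc ((c ^ 2 : ℕ) : ℤ) ∣ t ^ Nat.totient (c ^ 2) - 1 := h1
        _ ∣ (t ^ Nat.totient (c ^ 2)) ^ g - 1 ^ g := sub_dvd_pow_sub_pow _ 1 g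
        _ = t ^ e - 1 := by rw [← pow_mul, ← hg, one_pow]
    have hda : ((a ^ 2 : ℕ) : ℤ) ∣ t ^ e - 1 :=
      hdvd a ha2 (Int.natCast_dvd_natCast.mpr ⟨b, hNab⟩) hea
    have hdb : ((b ^ 2 : ℕ) : ℤ) ∣ t ^ e - 1 :=
      hdvd b hb2 (Int.natCast_dvd_natCast.mpr ⟨a, by rw [hNab]; ring⟩) heb
    have hcop2 : IsCoprime ((a ^ 2 : ℕ) : ℤ) ((b ^ 2 : ℕ) : ℤ) :=
      Nat.isCoprime_iff_coprime.mpr (Nat.Coprime.pow _ _ hcop)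
    have hfin := hcop2.mul_dvd hda hdb
    have hNsq : (N : ℤ) ^ 2 = ((a ^ 2 : ℕ) : ℤ) * ((b ^ 2 : ℕ) : ℤ) := by
      rw [hNab]; push_cast; ring
    rwa [hNsq]


lemma pow_entries (N : ℕ) (γ : Matrix.SpecialLinearGroup (Fin 2) ℤ)
    (h01 : (N : ℤ) ∣ γ 0 1) (h10 : (N : ℤ) ∣ γ 1 0) (k : ℕ) :
    (N : ℤ) ∣ (γ ^ k) 0 1 ∧ (N : ℤ) ∣ (γ ^ k) 1 0 ∧
    (N : ℤ) ^ 2 ∣ (γ ^ k) 0 0 - (γ 0 0) ^ k ∧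
    (N : ℤ) ^ 2 ∣ (γ ^ k) 1 1 - (γ 1 1) ^ k := by
  induction k with
  | zero =>
    simp [Matrix.SpecialLinearGroup.coe_one]
  | succ k ih =>
    obtain ⟨i01, i10, i00, i11⟩ := ih
    have hmul : ∀ i j, (γ ^ (k + 1)) i j =
        (γ ^ k) i 0 * γ 0 j + (γ ^ k) i 1 * γ 1 j := by
      intro i j
      rw [pow_succ]
      rw [show ((γ ^ k * γ : Matrix.SpecialLinearGroup (Fin 2) ℤ) : Matrix (Fin 2) (Fin 2) ℤ)
        = (γ ^ k : Matrix.SpecialLinearGroup (Fin 2) ℤ) * (γ : Matrix (Fin 2) (Fin 2) ℤ) from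
        Matrix.SpecialLinearGroup.coe_mul _ _]
      rw [Matrix.mul_apply, Fin.sum_univ_two]
    refine ⟨?_, ?_, ?_, ?_⟩
    · rw [hmul]
      exact dvd_add (Dvd.dvd.mul_left h01 _) (i01.mul_right _)
    · rw [hmul]
      exact dvd_add (i10.mul_right _) (Dvd.dvd.mul_left h10 _)
    · rw [hmul]
      have : (γ ^ k) 0 0 * γ 0 0 + (γ ^ k) 0 1 * γ 1 0 - γ 0 0 ^ (k + 1)
          = ((γ ^ k) 0 0 - γ 0 0 ^ k) * γ 0 0 + (γ ^ k) 0 1 * γ 1 0 := by ring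
      rw [this]
      refine dvd_add (i00.mul_right _) ?_
      obtain ⟨u, hu⟩ := i01
      obtain ⟨v, hv⟩ := h10
      exact ⟨u * v, by rw [hu, hv]; ring⟩
    · rw [hmul]
      have : (γ ^ k) 1 0 * γ 0 1 + (γ ^ k) 1 1 * γ 1 1 - γ 1 1 ^ (k + 1)
          = ((γ ^ k) 1 1 - γ 1 1 ^ k) * γ 1 1 + (γ ^ k) 1 0 * γ 0 1 := by ring
      rw [this]
      refine dvd_add (i11.mul_right _) ?_
      obtain ⟨u, hu⟩ := i10
      obtain ⟨v, hv⟩ := h01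
      exact ⟨u * v, by rw [hu, hv]; ring⟩


/-- Let `N ≥ 2` and let `γ ∈ SL₂(ℤ)` have both off-diagonal entries divisible by `N`
(`γ ∈ Γ₀′(N)`). Then `γ^{φ(N²)/2} ∈ Γ′(N)`: its off-diagonal entries are divisible by `N`
and each diagonal entry is congruent to `1` or `−1` modulo `N²`. -/
theorem pow_totient_mem_Gamma'
    (N : ℕ) (hN : 2 ≤ N) (γ : Matrix.SpecialLinearGroup (Fin 2) ℤ)
    (h01 : (N : ℤ) ∣ γ 0 1) (h10 : (N : ℤ) ∣ γ 1 0) :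
    (N : ℤ) ∣ (γ ^ (Nat.totient (N ^ 2) / 2)) 0 1 ∧
    (N : ℤ) ∣ (γ ^ (Nat.totient (N ^ 2) / 2)) 1 0 ∧
    ((γ ^ (Nat.totient (N ^ 2) / 2)) 0 0 ≡ 1 [ZMOD ((N : ℤ) ^ 2)] ∨
      (γ ^ (Nat.totient (N ^ 2) / 2)) 0 0 ≡ -1 [ZMOD ((N : ℤ) ^ 2)]) ∧
    ((γ ^ (Nat.totient (N ^ 2) / 2)) 1 1 ≡ 1 [ZMOD ((N : ℤ) ^ 2)] ∨
      (γ ^ (Nat.totient (N ^ 2) / 2)) 1 1 ≡ -1 [ZMOD ((N : ℤ) ^ 2)]) := by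
  set e := Nat.totient (N ^ 2) / 2 with he
  have hdet : γ 0 0 * γ 1 1 - γ 0 1 * γ 1 0 = 1 := by
    have h := γ.prop
    rw [Matrix.det_fin_two] at h
    exact h
  obtain ⟨b', hb'⟩ := id h01
  have hcop_a : IsCoprime (γ 0 0) (N : ℤ) :=
    ⟨γ 1 1, -(b' * (γ 1 0)), by linear_combination hdet + (γ 1 0) * hb'⟩
  have hcop_d : IsCoprime (γ 1 1) (N : ℤ) :=
    ⟨γ 0 0, -(b' * (γ 1 0)), by linear_combination hdet + (γ 1 0) * hb'⟩
  obtain ⟨e01, e10, e00, e11⟩ := pow_entries N γ h01 h10 e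
  have ha := key_lemma N hN hcop_a
  have hd := key_lemma N hN hcop_d
  refine ⟨e01, e10, ?_, ?_⟩
  · rcases ha with h | h
    · left
      have hdv : (N : ℤ) ^ 2 ∣ (γ ^ e) 0 0 - 1 := by
        have := dvd_add e00 h
        simpa [he] using this
      rw [Int.modEq_iff_dvd, show (1 : ℤ) - (γ ^ e) 0 0 = -((γ ^ e) 0 0 - 1) by ring]
      exact dvd_neg.mpr hdv
    · right
      have hdv : (N : ℤ) ^ 2 ∣ (γ ^ e) 0 0 + 1 := by
        have := dvd_add e00 h
        have h2 : (γ ^ e) 0 0 - γ 0 0 ^ e + (γ 0 0 ^ e + 1) = (γ ^ e) 0 0 + 1 := by ring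
        rwa [h2] at this
      rw [Int.modEq_iff_dvd, show (-1 : ℤ) - (γ ^ e) 0 0 = -((γ ^ e) 0 0 + 1) by ring]
      exact dvd_neg.mpr hdv
  · rcases hd with h | h
    · left
      have hdv : (N : ℤ) ^ 2 ∣ (γ ^ e) 1 1 - 1 := by
        have := dvd_add e11 h
        simpa [he] using this
      rw [Int.modEq_iff_dvd, show (1 : ℤ) - (γ ^ e) 1 1 = -((γ ^ e) 1 1 - 1) by ring]
      exact dvd_neg.mpr hdv
    · right
      have hdv : (N : ℤ) ^ 2 ∣ (γ ^ e) 1 1 + 1 := by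
        have := dvd_add e11 h
        have h2 : (γ ^ e) 1 1 - γ 1 1 ^ e + (γ 1 1 ^ e + 1) = (γ ^ e) 1 1 + 1 := by ring
        rwa [h2] at this
      rw [Int.modEq_iff_dvd, show (-1 : ℤ) - (γ ^ e) 1 1 = -((γ ^ e) 1 1 + 1) by ring]
      exact dvd_neg.mpr hdv
end
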